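/- Let f : ℝⁿ → ℝ be continuously differentiable and λ-strongly convex with L-Lipschitz gradient (0 < λ, L), let μ > 0, φ(x) = f(x) + μ‖x‖₁, and let x⋆ be a global minimizer of φ. Define the ISTA iteration x^{k+1} = S_{μ/L}(x^k − (1/L)∇f(x^k)) starting from any x⁰ ∈ ℝⁿ. Then for all k ≥ 0, φ(x^k) − φ(x⋆) ≤ (1 − λ/L)^k (φ(x⁰) − φ(x⋆)). -/

import Mathlib

open scoped InnerProductSpace
open Set

lemma ista_inner_sum {n : ℕ} (p q : EuclideanSpace ℝ (Fin n)) :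
    ⟪p, q⟫_ℝ = ∑ i, p i * q i := by
  simp [PiLp.inner_apply, RCLike.inner_apply, mul_comm]

lemma ista_normsq_sum {n : ℕ} (p : EuclideanSpace ℝ (Fin n)) :
    ‖p‖^2 = ∑ i, (p i)^2 := by
  rw [EuclideanSpace.norm_eq, Real.sq_sqrt (by positivity)]
  simp [sq_abs]

lemma ista_soft_facts (α c : ℝ) (hα : 0 ≤ α) :
    |c - Real.sign c * max (|c| - α) 0| ≤ α ∧
    (c - Real.sign c * max (|c| - α) 0) * (Real.sign c * max (|c| - α) 0)
      = α * |Real.sign c * max (|c| - α) 0| := by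
  rcases lt_trichotomy c 0 with h | h | h
  · rw [Real.sign_of_neg h]
    rcases le_or_gt (-c) α with h2 | h2
    · rw [max_eq_right (by rw [abs_of_neg h]; linarith)]
      constructor
      · rw [abs_le]; constructor <;> nlinarith [abs_of_neg h]
      · simp
    · rw [abs_of_neg h, max_eq_left (by linarith)]
      constructor
      · rw [abs_le]; constructor <;> nlinarith
      · rw [abs_of_neg (by nlinarith : (-1 : ℝ) * (-c - α) < 0)]; ring
  · subst h; simp [abs_of_nonneg hα, hα]
  · rw [Real.sign_of_pos h]
    rcases le_or_gt c α with h2 | h2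
    · rw [max_eq_right (by rw [abs_of_pos h]; linarith)]
      constructor
      · rw [abs_le]; constructor <;> nlinarith [abs_of_pos h]
      · simp
    · rw [abs_of_pos h, max_eq_left (by linarith)]
      constructor
      · rw [abs_le]; constructor <;> nlinarith
      · rw [abs_of_pos (by nlinarith : (0:ℝ) < 1 * (c - α))]; ring

lemma ista_prox_1d (L mu c u : ℝ) (hL : 0 < L) (hmu : 0 ≤ mu) :
    L/2 * (Real.sign c * max (|c| - mu/L) 0 - c)^2
      + mu * |Real.sign c * max (|c| - mu/L) 0|
      + L/2 * (u - Real.sign c * max (|c| - mu/L) 0)^2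
    ≤ L/2 * (u - c)^2 + mu * |u| := by
  set s := Real.sign c * max (|c| - mu/L) 0 with hs
  obtain ⟨h1, h2⟩ := ista_soft_facts (mu/L) c (by positivity)
  rw [← hs] at h1 h2
  have h3 : L * (c - s) * u ≤ mu * |u| := by
    calc L * (c - s) * u ≤ |L * (c - s) * u| := le_abs_self _
    _ = L * |c - s| * |u| := by rw [abs_mul, abs_mul, abs_of_pos hL]
    _ ≤ L * (mu/L) * |u| :=
        mul_le_mul_of_nonneg_right (mul_le_mul_of_nonneg_left h1 hL.le) (abs_nonneg u)
    _ = mu * |u| := by field_simp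
  have h4 : mu * |s| = L * (c - s) * s := by
    have := congrArg (fun z => L * z) h2
    field_simp at this; linarith [this]
  nlinarith [sq_nonneg (u - s)]

lemma ista_prox_step (L mu g xk u : ℝ) (hL : 0 < L) (hmu : 0 ≤ mu) :
    g * (Real.sign (xk - g/L) * max (|xk - g/L| - mu/L) 0 - xk)
      + L/2 * (Real.sign (xk - g/L) * max (|xk - g/L| - mu/L) 0 - xk)^2
      + mu * |Real.sign (xk - g/L) * max (|xk - g/L| - mu/L) 0|
    ≤ g * (u - xk) + L/2 * (u - xk)^2 + mu * |u| := by
  set c := xk - g/L with hc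
  set s := Real.sign c * max (|c| - mu/L) 0 with hs
  have key := ista_prox_1d L mu c u hL hmu
  rw [← hs] at key
  have e1 : L/2 * (s - c)^2 = L/2 * (s - xk)^2 + g * (s - xk) + g^2/(2*L) := by
    rw [hc]; field_simp; ring
  have e2 : L/2 * (u - c)^2 = L/2 * (u - xk)^2 + g * (u - xk) + g^2/(2*L) := by
    rw [hc]; field_simp; ring
  nlinarith [sq_nonneg (u - s)]

lemma ista_fo_sc {n : ℕ} (f : EuclideanSpace ℝ (Fin n) → ℝ) (lam : ℝ)
    (hf : ContDiff ℝ 1 f)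
    (hsc : ∀ x y : EuclideanSpace ℝ (Fin n), ∀ t ∈ Set.Icc (0:ℝ) 1,
      f (t • x + (1 - t) • y)
        ≤ t * f x + (1 - t) * f y - lam / 2 * t * (1 - t) * ‖x - y‖ ^ 2)
    (a b : EuclideanSpace ℝ (Fin n)) :
    f a + ⟪gradient f a, b - a⟫_ℝ + lam / 2 * ‖b - a‖ ^ 2 ≤ f b := by
  set v := b - a with hv
  set d := ⟪gradient f a, v⟫_ℝ with hd
  have hcurve : HasDerivAt (fun t : ℝ => a + t • v) v 0 := by
    simpa using ((hasDerivAt_id (0:ℝ)).smul_const v).const_add a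
  have hgrad : HasFDerivAt f (InnerProductSpace.toDual ℝ _ (gradient f a)) a :=
    ((hf.differentiable one_ne_zero).differentiableAt.hasGradientAt).hasFDerivAt
  have hg : HasDerivAt (fun t : ℝ => f (a + t • v)) d 0 := by
    have hgrad' : HasFDerivAt f (InnerProductSpace.toDual ℝ _ (gradient f a)) (a + (0:ℝ) • v) := by
      simpa using hgrad
    have := hgrad'.comp_hasDerivAt (x := (0:ℝ)) hcurve
    rw [InnerProductSpace.toDual_apply_apply] at this; exact this
  have hslope : Filter.Tendsto (slope (fun t : ℝ => f (a + t • v)) 0)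
      (nhdsWithin 0 (Ioi 0)) (nhds d) := by
    have h1 := (hg.hasDerivWithinAt (s := Ioi (0:ℝ)))
    rw [hasDerivWithinAt_iff_tendsto_slope] at h1
    simpa [Set.diff_singleton_eq_self (by simp : (0:ℝ) ∉ Ioi (0:ℝ))] using h1
  have hlim2 : Filter.Tendsto (fun t : ℝ => (f b - f a - lam/2 * ‖v‖^2) + lam/2 * t * ‖v‖^2)
      (nhdsWithin 0 (Ioi 0)) (nhds (f b - f a - lam/2 * ‖v‖^2)) := by
    have : Filter.Tendsto (fun t : ℝ => (f b - f a - lam/2 * ‖v‖^2) + lam/2 * t * ‖v‖^2)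
        (nhds 0) (nhds ((f b - f a - lam/2 * ‖v‖^2) + lam/2 * 0 * ‖v‖^2)) :=
      (Continuous.tendsto (by continuity) 0)
    simpa using this.mono_left nhdsWithin_le_nhds
  have hev : ∀ᶠ t in nhdsWithin (0:ℝ) (Ioi 0),
      slope (fun t : ℝ => f (a + t • v)) 0 t
        ≤ (f b - f a - lam/2 * ‖v‖^2) + lam/2 * t * ‖v‖^2 := by
    filter_upwards [Ioc_mem_nhdsGT_of_mem (by norm_num : (0:ℝ) ∈ Ico (0:ℝ) 1)] with t ht
    obtain ⟨ht0, ht1⟩ := ht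
    have key := hsc b a t ⟨ht0.le, ht1⟩
    have heq : t • b + (1 - t) • a = a + t • v := by
      rw [hv]; module
    rw [heq] at key
    have hba : ‖b - a‖ = ‖v‖ := by rw [hv]
    rw [hba] at key
    rw [slope_def_field]
    rw [sub_zero, div_le_iff₀ ht0]
    calc f (a + t • v) - f (a + (0:ℝ) • v)
        = f (a + t • v) - f a := by simp
      _ ≤ t * f b + (1 - t) * f a - lam / 2 * t * (1 - t) * ‖v‖ ^ 2 - f a := by linarith
      _ = ((f b - f a - lam/2 * ‖v‖^2) + lam/2 * t * ‖v‖^2) * t := by ring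
  have hfin : d ≤ f b - f a - lam/2 * ‖v‖^2 :=
    le_of_tendsto_of_tendsto hslope hlim2 hev
  linarith

lemma ista_descent {n : ℕ} (f : EuclideanSpace ℝ (Fin n) → ℝ) (L : ℝ)
    (hf : ContDiff ℝ 1 f)
    (hlip : ∀ x y : EuclideanSpace ℝ (Fin n),
      ‖gradient f x - gradient f y‖ ≤ L * ‖x - y‖)
    (a b : EuclideanSpace ℝ (Fin n)) :
    f b ≤ f a + ⟪gradient f a, b - a⟫_ℝ + L / 2 * ‖b - a‖ ^ 2 := by
  set v := b - a with hv
  have hcontgrad : Continuous (fun y : EuclideanSpace ℝ (Fin n) => gradient f y) := by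
    have h1 : Continuous (fun y : EuclideanSpace ℝ (Fin n) => fderiv ℝ f y) :=
      hf.continuous_fderiv one_ne_zero
    exact (InnerProductSpace.toDual ℝ (EuclideanSpace ℝ (Fin n))).symm.continuous.comp h1
  set g' : ℝ → ℝ := fun t => ⟪gradient f (a + t • v), v⟫_ℝ with hg'
  have hcurve : Continuous (fun t : ℝ => a + t • v) := by continuity
  have hcontg' : Continuous g' := by
    apply Continuous.inner (hcontgrad.comp hcurve) continuous_const
  have hderiv : ∀ t ∈ uIcc (0:ℝ) 1, HasDerivAt (fun t : ℝ => f (a + t • v)) (g' t) t := by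
    intro t _
    have hcurve' : HasDerivAt (fun t : ℝ => a + t • v) v t := by
      simpa using ((hasDerivAt_id t).smul_const v).const_add a
    have hgrad : HasFDerivAt f
        (InnerProductSpace.toDual ℝ _ (gradient f (a + t • v))) (a + t • v) :=
      ((hf.differentiable one_ne_zero).differentiableAt.hasGradientAt).hasFDerivAt
    have := hgrad.comp_hasDerivAt (x := t) hcurve'
    rw [InnerProductSpace.toDual_apply_apply] at this; exact this
  have hint : ∫ t in (0:ℝ)..1, g' t = f (a + (1:ℝ) • v) - f (a + (0:ℝ) • v) := by
    have := intervalIntegral.integral_eq_sub_of_hasDerivAt hderiv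
      (hcontg'.intervalIntegrable 0 1)
    simpa using this
  have hmono : ∫ t in (0:ℝ)..1, g' t ≤ ∫ t in (0:ℝ)..1, (g' 0 + L * ‖v‖^2 * t) := by
    apply intervalIntegral.integral_mono_on (by norm_num)
      (hcontg'.intervalIntegrable 0 1)
      ((continuous_const.add (continuous_const.mul continuous_id) :
        Continuous fun t : ℝ => g' 0 + L * ‖v‖^2 * t).intervalIntegrable 0 1)
    intro t ht
    have h1 : g' t - g' 0 ≤ L * ‖v‖^2 * t := by
      have h2 : g' t - g' 0 = ⟪gradient f (a + t • v) - gradient f (a + (0:ℝ) • v), v⟫_ℝ := by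
        rw [hg']; rw [inner_sub_left]
      rw [h2]
      calc ⟪gradient f (a + t • v) - gradient f (a + (0:ℝ) • v), v⟫_ℝ
          ≤ ‖gradient f (a + t • v) - gradient f (a + (0:ℝ) • v)‖ * ‖v‖ :=
            real_inner_le_norm _ _
        _ ≤ (L * ‖(a + t • v) - (a + (0:ℝ) • v)‖) * ‖v‖ :=
            mul_le_mul_of_nonneg_right (hlip _ _) (norm_nonneg _)
        _ = L * ‖v‖^2 * t := by
            have : (a + t • v) - (a + (0:ℝ) • v) = t • v := by module
            rw [this, norm_smul, Real.norm_eq_abs, abs_of_nonneg ht.1]; ring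
    show g' t ≤ g' 0 + L * ‖v‖^2 * t
    linarith
  have hval : ∫ t in (0:ℝ)..1, (g' 0 + L * ‖v‖^2 * t) = g' 0 + L / 2 * ‖v‖^2 := by
    rw [intervalIntegral.integral_add (f := fun _ => g' 0) (g := fun t => L * ‖v‖^2 * t) (intervalIntegrable_const)
      ((continuous_const.mul continuous_id :
        Continuous fun t : ℝ => L * ‖v‖^2 * t).intervalIntegrable 0 1)]
    rw [intervalIntegral.integral_const_mul, integral_id]
    simp
    ring
  have hg0 : g' 0 = ⟪gradient f a, v⟫_ℝ := by simp [hg']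
  have h01 : a + (1:ℝ) • v = b := by rw [hv]; module
  have h00 : a + (0:ℝ) • v = a := by module
  rw [h01, h00] at hint
  rw [hval, hg0] at hmono
  linarith [hint ▸ hmono]

set_option maxHeartbeats 1000000 in
/-- Linear convergence of the ISTA iteration
`x^{k+1} = S_{μ/L}(x^k − (1/L)∇f(x^k))` for strongly convex `f` with
Lipschitz gradient. -/
theorem stmt_4 {n : ℕ} (hn : 0 < n)
    (f : EuclideanSpace ℝ (Fin n) → ℝ)
    (lam L mu : ℝ) (hlam : 0 < lam) (hL : 0 < L) (hmu : 0 < mu)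
    (hf : ContDiff ℝ 1 f)
    (hsc : ∀ x y : EuclideanSpace ℝ (Fin n), ∀ t ∈ Set.Icc (0:ℝ) 1,
      f (t • x + (1 - t) • y)
        ≤ t * f x + (1 - t) * f y - lam / 2 * t * (1 - t) * ‖x - y‖ ^ 2)
    (hlip : ∀ x y : EuclideanSpace ℝ (Fin n),
      ‖gradient f x - gradient f y‖ ≤ L * ‖x - y‖)
    (φ : EuclideanSpace ℝ (Fin n) → ℝ)
    (hφ : ∀ x, φ x = f x + mu * ∑ i, |x i|)
    (xstar : EuclideanSpace ℝ (Fin n)) (hmin : ∀ y, φ xstar ≤ φ y)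
    (x : ℕ → EuclideanSpace ℝ (Fin n))
    (hista : ∀ k : ℕ, ∀ i : Fin n,
      x (k + 1) i = Real.sign (x k i - (1 / L) * gradient f (x k) i) *
        max (|x k i - (1 / L) * gradient f (x k) i| - mu / L) 0) :
    ∀ k : ℕ, φ (x k) - φ xstar ≤ (1 - lam / L) ^ k * (φ (x 0) - φ xstar) := by
  have hfo := ista_fo_sc f lam hf hsc
  -- lam ≤ L
  have hlamL : lam ≤ L := by
    set a : EuclideanSpace ℝ (Fin n) := 0 with ha
    set b : EuclideanSpace ℝ (Fin n) := EuclideanSpace.single (⟨0, hn⟩ : Fin n) (1:ℝ) with hb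
    have hba : ‖b - a‖ = 1 := by
      rw [ha, sub_zero, hb, EuclideanSpace.norm_single]; norm_num
    have h1 := hfo a b
    have h2 := hfo b a
    have hab : a - b = -(b - a) := by module
    rw [hab, inner_neg_right, norm_neg] at h2
    have h3 : ⟪gradient f b - gradient f a, b - a⟫_ℝ
        ≤ ‖gradient f b - gradient f a‖ * ‖b - a‖ := real_inner_le_norm _ _
    have h4 : ‖gradient f b - gradient f a‖ * ‖b - a‖ ≤ (L * ‖b - a‖) * ‖b - a‖ :=
      mul_le_mul_of_nonneg_right (hlip b a) (norm_nonneg _)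
    rw [inner_sub_left] at h3
    rw [hba] at h1 h2 h3 h4
    nlinarith
  set t : ℝ := lam / L with htdef
  have ht0 : 0 ≤ t := by positivity
  have ht1 : t ≤ 1 := by rw [htdef, div_le_one hL]; exact hlamL
  -- one step inequality
  have hstep : ∀ k : ℕ, φ (x (k+1)) ≤ t * φ xstar + (1 - t) * φ (x k) := by
    intro k
    set z : EuclideanSpace ℝ (Fin n) := t • xstar + (1 - t) • x k with hz
    have hzi : ∀ i, z i = t * xstar i + (1 - t) * x k i := by
      intro i; rw [hz]; simp
    -- descent in sum form
    have hd := ista_descent f L hf hlip (x k) (x (k+1))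
    have hsum1 : ∑ i, (gradient f (x k) i * (x (k+1) i - x k i)
          + L/2 * (x (k+1) i - x k i)^2 + mu * |x (k+1) i|)
        = ⟪gradient f (x k), x (k+1) - x k⟫_ℝ + L/2 * ‖x (k+1) - x k‖^2
          + mu * ∑ i, |x (k+1) i| := by
      rw [ista_inner_sum, ista_normsq_sum, Finset.mul_sum, Finset.mul_sum,
        ← Finset.sum_add_distrib, ← Finset.sum_add_distrib]
      exact Finset.sum_congr rfl (fun i _ => by simp [PiLp.sub_apply])
    have hsum2 : ∑ i, (gradient f (x k) i * (z i - x k i)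
          + L/2 * (z i - x k i)^2 + mu * |z i|)
        = ⟪gradient f (x k), z - x k⟫_ℝ + L/2 * ‖z - x k‖^2 + mu * ∑ i, |z i| := by
      rw [ista_inner_sum, ista_normsq_sum, Finset.mul_sum, Finset.mul_sum,
        ← Finset.sum_add_distrib, ← Finset.sum_add_distrib]
      exact Finset.sum_congr rfl (fun i _ => by simp [PiLp.sub_apply])
    have hB : ∑ i, (gradient f (x k) i * (x (k+1) i - x k i)
          + L/2 * (x (k+1) i - x k i)^2 + mu * |x (k+1) i|)
        ≤ ∑ i, (gradient f (x k) i * (z i - x k i)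
          + L/2 * (z i - x k i)^2 + mu * |z i|) := by
      apply Finset.sum_le_sum
      intro i _
      have hx : x (k+1) i = Real.sign (x k i - gradient f (x k) i / L) *
          max (|x k i - gradient f (x k) i / L| - mu/L) 0 := by
        rw [hista k i, show x k i - 1/L * gradient f (x k) i
          = x k i - gradient f (x k) i / L by ring]
      rw [hx]
      exact ista_prox_step L mu (gradient f (x k) i) (x k i) (z i) hL hmu.le
    have hC := hfo (x k) z
    have hD : ‖z - x k‖^2 = t^2 * ‖xstar - x k‖^2 := by
      have : z - x k = t • (xstar - x k) := by rw [hz]; module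
      rw [this, norm_smul, Real.norm_eq_abs, abs_of_nonneg ht0, mul_pow]
    have hE := hsc xstar (x k) t ⟨ht0, ht1⟩
    rw [← hz] at hE
    have hF : ∑ i, |z i| ≤ t * ∑ i, |xstar i| + (1 - t) * ∑ i, |x k i| := by
      rw [Finset.mul_sum, Finset.mul_sum, ← Finset.sum_add_distrib]
      apply Finset.sum_le_sum
      intro i _
      rw [hzi i]
      calc |t * xstar i + (1 - t) * x k i|
          ≤ |t * xstar i| + |(1 - t) * x k i| := abs_add_le _ _
        _ = t * |xstar i| + (1 - t) * |x k i| := by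
            rw [abs_mul, abs_mul, abs_of_nonneg ht0,
              abs_of_nonneg (show (0:ℝ) ≤ 1 - t by linarith)]
    have hF' : mu * ∑ i, |z i| ≤ mu * (t * ∑ i, |xstar i| + (1 - t) * ∑ i, |x k i|) :=
      mul_le_mul_of_nonneg_left hF hmu.le
    have hco : L/2 * ‖z - x k‖^2
        = lam/2 * ‖z - x k‖^2 + lam/2 * t * (1 - t) * ‖xstar - x k‖^2 := by
      rw [hD, htdef]; field_simp; ring
    rw [hφ (x (k+1)), hφ (x k), hφ xstar]
    have hA : f (x (k+1)) + mu * ∑ i, |x (k+1) i|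
        ≤ f (x k) + ∑ i, (gradient f (x k) i * (x (k+1) i - x k i)
          + L/2 * (x (k+1) i - x k i)^2 + mu * |x (k+1) i|) := by
      rw [hsum1]; linarith
    rw [hsum2] at hB
    linarith [hA, hB, hC, hE, hF', hco]
  intro k
  induction k with
  | zero => simp
  | succ k ih =>
    have h1 := hstep k
    have h2 : (1 - t) * (φ (x k) - φ xstar)
        ≤ (1 - t) * ((1 - t)^k * (φ (x 0) - φ xstar)) :=
      mul_le_mul_of_nonneg_left ih (by linarith)
    rw [pow_succ]
    nlinarith [h1, h2]
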